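/- Let η, σ : 2πℤ³ → ℝ with |η_p| ≤ C N^κ |p|^{-2} 1(|p| ≥ N^{κ/2}) and |σ_q| ≤ C N^κ |q|^{-2} 1(|q| ≥ N^{κ/2-β/4}), and define A_{p,q} = N^{-1/2}·2p²η_p σ_q/(p²+q²+(p+q)²) as above. Then for every q ∈ 2πℤ³ \ {0}, Σ_{p ∈ 2πℤ³} |A_{p, -p-q}| ≤ C' N^{2κ - 1/2} |q|^{-1}. -/

import Mathlib

open Real Finset

/-- The Euclidean norm of the dual-lattice point `2πp`, `p ∈ ℤ³`. -/
noncomputable def latNorm (p : Fin 3 → ℤ) : ℝ :=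
  Real.sqrt (∑ i, (2 * Real.pi * (p i : ℝ))^2)


lemma latNorm_nonneg (p : Fin 3 → ℤ) : 0 ≤ latNorm p := Real.sqrt_nonneg _

lemma latNorm_sq (p : Fin 3 → ℤ) : (latNorm p)^2 = ∑ i, (2 * π * (p i : ℝ))^2 := by
  rw [latNorm, Real.sq_sqrt (by positivity)]

lemma latNorm_neg (p : Fin 3 → ℤ) : latNorm (-p) = latNorm p := by
  unfold latNorm
  congr 1
  refine Finset.sum_congr rfl fun i _ => ?_
  simp only [Pi.neg_apply, Int.cast_neg]
  ring

/-- sup norm of lattice point -/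
def mm (p : Fin 3 → ℤ) : ℕ := Finset.univ.sup fun i => (p i).natAbs

lemma exists_mm (p : Fin 3 → ℤ) : ∃ i, mm p = (p i).natAbs := by
  obtain ⟨i, _, hi⟩ := Finset.exists_mem_eq_sup Finset.univ ⟨0, Finset.mem_univ 0⟩
    (fun i => (p i).natAbs)
  exact ⟨i, hi⟩

lemma mm_le (p : Fin 3 → ℤ) (i : Fin 3) : (p i).natAbs ≤ mm p :=
  Finset.le_sup (f := fun i => (p i).natAbs) (Finset.mem_univ i)

lemma one_le_mm {p : Fin 3 → ℤ} (hp : p ≠ 0) : 1 ≤ mm p := by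
  by_contra h
  push_neg at h
  apply hp
  funext i
  have := mm_le p i
  have : (p i).natAbs = 0 := by omega
  simpa [Int.natAbs_eq_zero] using this

lemma latNorm_pos {p : Fin 3 → ℤ} (hp : p ≠ 0) : 0 < latNorm p := by
  obtain ⟨i, hi⟩ := exists_mm p
  have h1 : 1 ≤ (p i).natAbs := hi ▸ one_le_mm hp
  have hpi : (p i : ℝ) ≠ 0 := by
    simpa using fun h => by omega
  apply Real.sqrt_pos.2
  have h2 : (0:ℝ) < (2 * π * (p i : ℝ))^2 := by positivity
  calc (0:ℝ) < (2 * π * (p i : ℝ))^2 := h2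
    _ ≤ ∑ j, (2 * π * (p j : ℝ))^2 :=
        Finset.single_le_sum (f := fun j => (2 * π * (p j : ℝ))^2)
          (fun j _ => by positivity) (Finset.mem_univ i)

lemma latNorm_sq_ge (p : Fin 3 → ℤ) : (2 * π * (mm p : ℝ))^2 ≤ (latNorm p)^2 := by
  obtain ⟨i, hi⟩ := exists_mm p
  rw [latNorm_sq]
  have h1 : (2 * π * (mm p : ℝ))^2 = (2 * π * (p i : ℝ))^2 := by
    rw [hi]
    have h3 : ((p i).natAbs : ℝ) = |(p i : ℝ)| := by
      rw [Nat.cast_natAbs]; push_cast; ring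
    rw [h3, mul_pow, mul_pow, sq_abs]
    ring
  rw [h1]
  exact Finset.single_le_sum (f := fun j => (2 * π * (p j : ℝ))^2)
    (fun j _ => by positivity) (Finset.mem_univ i)

/-- latBox of radius k in sup norm -/
noncomputable def latBox (k : ℕ) : Finset (Fin 3 → ℤ) := Finset.Icc (fun _ => -(k:ℤ)) (fun _ => (k:ℤ))

lemma mem_box {k : ℕ} {p : Fin 3 → ℤ} : p ∈ latBox k ↔ mm p ≤ k := by
  rw [latBox, Finset.mem_Icc, mm, Finset.sup_le_iff]
  constructor
  · rintro ⟨h1, h2⟩ i _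
    have a : -(k:ℤ) ≤ p i := h1 i
    have b : p i ≤ (k:ℤ) := h2 i
    omega
  · intro h
    constructor
    · refine Pi.le_def.2 fun i => ?_
      have hh : (p i).natAbs ≤ k := h i (Finset.mem_univ i)
      omega
    · refine Pi.le_def.2 fun i => ?_
      have hh : (p i).natAbs ≤ k := h i (Finset.mem_univ i)
      omega

lemma card_box (k : ℕ) : (latBox k).card = (2*k+1)^3 := by
  rw [latBox, Pi.card_Icc]
  have : ∀ i : Fin 3, (Finset.Icc (-(k:ℤ)) (k:ℤ)).card = 2*k+1 := by
    intro i
    rw [Int.card_Icc]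
    omega
  rw [Finset.prod_congr rfl (fun i _ => this i)]
  simp

lemma card_shell (j : ℕ) : ((latBox (j+1)) \ (latBox j)).card ≤ 26*(j+1)^2 := by
  have hsub : latBox j ⊆ latBox (j+1) := by
    intro p hp
    rw [mem_box] at *
    omega
  rw [Finset.card_sdiff_of_subset hsub, card_box, card_box]
  have h1 : (2*(j+1)+1)^3 ≤ 26*(j+1)^2 + (2*j+1)^3 := by
    zify
    nlinarith [sq_nonneg (j:ℤ), Int.natCast_nonneg j]
  omega

lemma telescope_icc (M : ℝ) (K : ℕ) :
    ∑ k ∈ Finset.Icc 1 K, (1/(2*π*((k:ℝ)-1)+M) - 1/(2*π*(k:ℝ)+M))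
      = 1/M - 1/(2*π*(K:ℝ)+M) := by
  induction K with
  | zero => simp
  | succ n ih =>
    have hins : Finset.Icc 1 (n+1) = insert (n+1) (Finset.Icc 1 n) := by
      ext x; simp only [Finset.mem_Icc, Finset.mem_insert]; omega
    rw [hins, Finset.sum_insert (by simp), ih]
    push_cast
    ring

lemma sum_tele_le (M : ℝ) (hM : 0 < M) (u : Finset ℕ) (hu : 0 ∉ u) :
    ∑ k ∈ u, (1/(2*π*((k:ℝ)-1)+M) - 1/(2*π*(k:ℝ)+M)) ≤ 1/M := by
  have hterm : ∀ k : ℕ, 1 ≤ k →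
      0 ≤ 1/(2*π*((k:ℝ)-1)+M) - 1/(2*π*(k:ℝ)+M) := by
    intro k hk
    have hk1 : (1:ℝ) ≤ (k:ℝ) := by exact_mod_cast hk
    have ha : 0 < 2*π*((k:ℝ)-1)+M := by
      have : 0 ≤ 2*π*((k:ℝ)-1) := by
        have := Real.pi_pos
        nlinarith
      linarith
    have hb : 2*π*((k:ℝ)-1)+M ≤ 2*π*(k:ℝ)+M := by
      have := Real.pi_pos
      nlinarith
    have := one_div_le_one_div_of_le ha hb
    linarith
  calc ∑ k ∈ u, (1/(2*π*((k:ℝ)-1)+M) - 1/(2*π*(k:ℝ)+M))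
      ≤ ∑ k ∈ Finset.Icc 1 (u.sup id), (1/(2*π*((k:ℝ)-1)+M) - 1/(2*π*(k:ℝ)+M)) := by
        apply Finset.sum_le_sum_of_subset_of_nonneg
        · intro k hk
          rw [Finset.mem_Icc]
          refine ⟨?_, Finset.le_sup (f := id) hk⟩
          rcases Nat.eq_zero_or_pos k with h | h
          · exact absurd (h ▸ hk) hu
          · exact h
        · intro k hk _
          rw [Finset.mem_Icc] at hk
          exact hterm k hk.1
    _ = 1/M - 1/(2*π*((u.sup id : ℕ):ℝ)+M) := telescope_icc M _
    _ ≤ 1/M := by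
        have : 0 ≤ 1/(2*π*((u.sup id : ℕ):ℝ)+M) := by positivity
        linarith

lemma frac_le (M : ℝ) (hM : 0 < M) (j : ℕ) :
    26*((j:ℝ)+1)^2 * (1/((2*π*((j:ℝ)+1))^2 * ((2*π*((j:ℝ)+1))^2 + M^2)))
      ≤ 13/(2*π^3) * (1/(2*π*(((j:ℝ)+1)-1)+M) - 1/(2*π*((j:ℝ)+1)+M)) := by
  have hπ := Real.pi_pos
  have hx : (0:ℝ) ≤ (j:ℝ) := Nat.cast_nonneg j
  set x := (j:ℝ) with hxdef
  have ha : 0 < 2*π*x + M := by nlinarith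
  have hb : 0 < 2*π*(x+1) + M := by nlinarith
  have hd : 1/(2*π*((x+1)-1)+M) - 1/(2*π*(x+1)+M)
      = 2*π/((2*π*x+M)*(2*π*(x+1)+M)) := by
    rw [show 2*π*((x+1)-1)+M = 2*π*x+M by ring]
    field_simp
    ring
  rw [hd]
  have hab : (2*π*x+M)*(2*π*(x+1)+M) ≤ 2*((2*π*(x+1))^2 + M^2) := by
    nlinarith [sq_nonneg (2*π*(x+1) - M)]
  have hD : 0 < (2*π*(x+1))^2 * ((2*π*(x+1))^2 + M^2) := by positivity
  rw [mul_one_div, div_mul_div_comm, div_le_div_iff₀ hD (by positivity)]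
  nlinarith [mul_le_mul_of_nonneg_left hab
    (show (0:ℝ) ≤ 52*π^3*(x+1)^2 by positivity)]

lemma key_sum (M : ℝ) (hM : 0 < M) (t : Finset (Fin 3 → ℤ))
    (ht : ∀ r ∈ t, r ≠ (0 : Fin 3 → ℤ)) :
    ∑ r ∈ t, 1/((latNorm r)^2 * ((latNorm r)^2 + M^2)) ≤ 13/(2*π^3) * (1/M) := by
  have hπ := Real.pi_pos
  have step1 : ∀ r ∈ t, 1/((latNorm r)^2 * ((latNorm r)^2 + M^2))
      ≤ 1/((2*π*(mm r:ℝ))^2 * ((2*π*(mm r:ℝ))^2 + M^2)) := by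
    intro r hr
    have h1 := latNorm_sq_ge r
    have hm : 1 ≤ mm r := one_le_mm (ht r hr)
    have hm' : (1:ℝ) ≤ (mm r : ℝ) := by exact_mod_cast hm
    have h2a : 0 < 2*π*(mm r:ℝ) := by nlinarith
    have h2 : 0 < (2*π*(mm r:ℝ))^2 := pow_pos h2a 2
    apply one_div_le_one_div_of_le
    · exact mul_pos h2 (by positivity)
    · exact mul_le_mul h1 (by linarith) (by positivity) (by positivity)
  calc ∑ r ∈ t, 1/((latNorm r)^2*((latNorm r)^2+M^2))
      ≤ ∑ r ∈ t, 1/((2*π*(mm r:ℝ))^2 * ((2*π*(mm r:ℝ))^2 + M^2)) :=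
        Finset.sum_le_sum step1
    _ = ∑ k ∈ t.image mm, ∑ r ∈ t.filter (fun r => mm r = k),
          1/((2*π*(mm r:ℝ))^2 * ((2*π*(mm r:ℝ))^2 + M^2)) :=
        (Finset.sum_fiberwise_of_maps_to
          (fun r hr => Finset.mem_image_of_mem mm hr) _).symm
    _ = ∑ k ∈ t.image mm, ((t.filter (fun r => mm r = k)).card : ℝ) *
          (1/((2*π*(k:ℝ))^2 * ((2*π*(k:ℝ))^2 + M^2))) := by
        refine Finset.sum_congr rfl fun k _ => ?_
        have hcong : ∀ r ∈ t.filter (fun r => mm r = k),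
            1/((2*π*(mm r:ℝ))^2 * ((2*π*(mm r:ℝ))^2+M^2))
              = 1/((2*π*(k:ℝ))^2*((2*π*(k:ℝ))^2+M^2)) := by
          intro r hr
          rw [(Finset.mem_filter.1 hr).2]
        rw [Finset.sum_congr rfl hcong, Finset.sum_const, nsmul_eq_mul]
    _ ≤ ∑ k ∈ t.image mm,
          13/(2*π^3) * (1/(2*π*((k:ℝ)-1)+M) - 1/(2*π*(k:ℝ)+M)) := by
        refine Finset.sum_le_sum fun k hk => ?_
        obtain ⟨r, hr, hrk⟩ := Finset.mem_image.1 hk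
        have hk1 : 1 ≤ k := hrk ▸ one_le_mm (ht r hr)
        obtain ⟨j, rfl⟩ : ∃ j, k = j+1 := ⟨k-1, by omega⟩
        have hcard : (t.filter (fun r => mm r = j+1)).card ≤ 26*(j+1)^2 := by
          refine le_trans (Finset.card_le_card ?_) (card_shell j)
          intro r' hr'
          obtain ⟨hr't, hr'k⟩ := Finset.mem_filter.1 hr'
          rw [Finset.mem_sdiff, mem_box, mem_box]
          omega
        have hg : (0:ℝ) ≤ 1/((2*π*((j:ℝ)+1))^2 * ((2*π*((j:ℝ)+1))^2 + M^2)) := by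
          positivity
        have hcast : (((j:ℕ)+1:ℕ):ℝ) = (j:ℝ)+1 := by push_cast; ring
        calc ((t.filter (fun r => mm r = j+1)).card : ℝ) *
              (1/((2*π*(((j:ℕ)+1:ℕ):ℝ))^2 * ((2*π*(((j:ℕ)+1:ℕ):ℝ))^2 + M^2)))
            ≤ (26*((j:ℝ)+1)^2) *
              (1/((2*π*((j:ℝ)+1))^2 * ((2*π*((j:ℝ)+1))^2 + M^2))) := by
              rw [hcast]
              apply mul_le_mul_of_nonneg_right _ hg
              calc ((t.filter (fun r => mm r = j+1)).card : ℝ)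
                  ≤ ((26*(j+1)^2 : ℕ) : ℝ) := by exact_mod_cast hcard
                _ = 26*((j:ℝ)+1)^2 := by push_cast; ring
          _ ≤ 13/(2*π^3) * (1/(2*π*((((j:ℕ)+1:ℕ):ℝ)-1)+M)
                - 1/(2*π*(((j:ℕ)+1:ℕ):ℝ)+M)) := by
              rw [hcast]
              exact frac_le M hM j
    _ = 13/(2*π^3) * ∑ k ∈ t.image mm,
          (1/(2*π*((k:ℝ)-1)+M) - 1/(2*π*(k:ℝ)+M)) := (Finset.mul_sum _ _ _).symm
    _ ≤ 13/(2*π^3) * (1/M) := by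
        apply mul_le_mul_of_nonneg_left _ (by positivity)
        apply sum_tele_le M hM
        intro h0
        obtain ⟨r, hr, hr0⟩ := Finset.mem_image.1 h0
        have := one_le_mm (ht r hr)
        omega


/-- With `|η_p| ≤ CN^κ|p|^{-2}1(|p| ≥ N^{κ/2})`,
`|σ_q| ≤ CN^κ|q|^{-2}1(|q| ≥ N^{κ/2-β/4})` (`β = 2-3κ`), and
`A_{p,q} = N^{-1/2}·2p²η_pσ_q/(p²+q²+(p+q)²)`, one has for every `q ≠ 0`
`∑_p |A_{p,-p-q}| ≤ C' N^{2κ-1/2} |q|^{-1}` with `C'` depending only on `C` and `κ`. -/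
theorem cubic_kernel_diag_sum (C κ : ℝ) (hC : 0 < C) (hκ1 : 1/2 < κ) (hκ2 : κ < 2/3) :
    ∃ C' : ℝ, 0 < C' ∧ ∀ N : ℝ, 1 ≤ N →
      ∀ η σ : (Fin 3 → ℤ) → ℝ,
        (∀ p, |η p| ≤ C * N^κ / (latNorm p)^2 *
          (if N^(κ/2) ≤ latNorm p then 1 else 0)) →
        (∀ q, |σ q| ≤ C * N^κ / (latNorm q)^2 *
          (if N^(κ/2 - (2-3*κ)/4) ≤ latNorm q then 1 else 0)) →
      ∀ A : (Fin 3 → ℤ) → (Fin 3 → ℤ) → ℝ,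
        (∀ p q, A p q = if p = 0 ∨ q = 0 then 0 else
          N^(-(1:ℝ)/2) * (2 * (latNorm p)^2 * η p * σ q) /
            ((latNorm p)^2 + (latNorm q)^2 + (latNorm (p+q))^2)) →
      ∀ q : Fin 3 → ℤ, q ≠ 0 →
        ∑' p : Fin 3 → ℤ, |A p (-p - q)| ≤ C' * N^(2*κ - 1/2) / latNorm q := by
  refine ⟨13*C^2, by positivity, ?_⟩
  intro N hN η σ hη hσ A hA q hq
  have hπ := Real.pi_pos
  have hN0 : (0:ℝ) < N := lt_of_lt_of_le one_pos hN
  have hM : 0 < latNorm q := latNorm_pos hq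
  set M := latNorm q with hMdef
  have hNe : 0 < N^(2*κ - 1/2) := Real.rpow_pos_of_pos hN0 _
  have hB : (0:ℝ) ≤ 13*C^2 * N^(2*κ - 1/2) / M :=
    div_nonneg (mul_nonneg (mul_nonneg (by norm_num) (sq_nonneg C)) hNe.le) hM.le
  refine tsum_le_of_sum_le' hB fun s => ?_
  set F : (Fin 3 → ℤ) → ℝ := fun r =>
    2*C^2*N^(2*κ - 1/2) * (1/((latNorm r)^2 * ((latNorm r)^2 + M^2))) with hF
  have hF0 : ∀ r, 0 ≤ F r := by
    intro r
    rw [hF]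
    refine mul_nonneg (mul_nonneg (mul_nonneg (by norm_num) (sq_nonneg C)) hNe.le) ?_
    positivity
  have keyz : ∀ p : Fin 3 → ℤ, p + q = 0 → A p (-p - q) = 0 := by
    intro p hp
    rw [hA]
    apply if_pos
    right
    have h1 : -p - q = -(p+q) := by abel
    rw [h1, hp, neg_zero]
  have key : ∀ p : Fin 3 → ℤ, p + q ≠ 0 → |A p (-p - q)| ≤ F (p+q) := by
    intro p hpq
    by_cases hp : p = 0
    · rw [hA, if_pos (Or.inl hp), abs_zero]
      exact hF0 _
    have hnpq : -p - q ≠ 0 := by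
      intro h
      apply hpq
      have h1 : -p - q = -(p+q) := by abel
      rw [h1, neg_eq_zero] at h
      exact h
    rw [hA, if_neg (by push_neg; exact ⟨hp, hnpq⟩)]
    have e1 : -p - q = -(p+q) := by abel
    have e2 : latNorm (-p - q) = latNorm (p+q) := by rw [e1, latNorm_neg]
    have e3 : latNorm (p + (-p - q)) = M := by
      have h4 : p + (-p - q) = -q := by abel
      rw [h4, latNorm_neg]
    rw [e2, e3]
    have hLp : 0 < latNorm p := latNorm_pos hp
    have hLr : 0 < latNorm (p+q) := latNorm_pos hpq
    set Lp := latNorm p with hLpdef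
    set Lr := latNorm (p+q) with hLrdef
    have hden : 0 < Lp^2 + Lr^2 + M^2 := by positivity
    have hNa : (0:ℝ) ≤ N^(-(1:ℝ)/2) := (Real.rpow_pos_of_pos hN0 _).le
    have hCN : (0:ℝ) ≤ C*N^κ := mul_nonneg hC.le (Real.rpow_pos_of_pos hN0 _).le
    have hηp : |η p| ≤ C*N^κ/Lp^2 := by
      refine le_trans (hη p) ?_
      apply mul_le_of_le_one_right (div_nonneg hCN (sq_nonneg _))
      split_ifs <;> norm_num
    have hσp : |σ (-p - q)| ≤ C*N^κ/Lr^2 := by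
      refine le_trans (hσ (-p - q)) ?_
      rw [e2]
      apply mul_le_of_le_one_right (div_nonneg hCN (sq_nonneg _))
      split_ifs <;> norm_num
    have habs : |N^(-(1:ℝ)/2) * (2 * Lp^2 * η p * σ (-p - q)) / (Lp^2 + Lr^2 + M^2)|
        = N^(-(1:ℝ)/2) * (2 * Lp^2 * |η p| * |σ (-p - q)|) / (Lp^2 + Lr^2 + M^2) := by
      rw [abs_div, abs_of_pos hden, abs_mul, abs_mul, abs_mul,
        abs_of_nonneg hNa, abs_of_nonneg (by positivity : (0:ℝ) ≤ (2:ℝ) * Lp^2)]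
    rw [habs]
    have hNpow : N^(-(1:ℝ)/2) * N^κ * N^κ = N^(2*κ - 1/2) := by
      rw [← Real.rpow_add hN0, ← Real.rpow_add hN0]
      congr 1
      ring
    calc N^(-(1:ℝ)/2) * (2 * Lp^2 * |η p| * |σ (-p - q)|) / (Lp^2+Lr^2+M^2)
        ≤ N^(-(1:ℝ)/2) * (2*Lp^2*(C*N^κ/Lp^2)*(C*N^κ/Lr^2)) / (Lr^2+M^2) := by
          gcongr
          next => nlinarith [sq_nonneg Lp]
      _ = 2*C^2*(N^(-(1:ℝ)/2) * N^κ * N^κ) * (1/(Lr^2*(Lr^2+M^2))) := by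
          have h5 : Lr^2 + M^2 ≠ 0 := by positivity
          field_simp
      _ = F (p+q) := by
          rw [hNpow, hF]
  have hsplit : ∑ p ∈ s, |A p (-p - q)|
      = ∑ p ∈ s.filter (fun p => p + q ≠ 0), |A p (-p - q)| := by
    symm
    apply Finset.sum_filter_of_ne
    intro p _ hne hpq0
    exact hne (by rw [keyz p hpq0, abs_zero])
  rw [hsplit]
  have hinj : ∀ x ∈ s.filter (fun p => p + q ≠ 0), ∀ y ∈ s.filter (fun p => p + q ≠ 0),
      x + q = y + q → x = y := fun x _ y _ h => add_right_cancel h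
  have himg : ∀ r ∈ (s.filter (fun p => p + q ≠ 0)).image (fun p => p + q),
      r ≠ (0 : Fin 3 → ℤ) := by
    intro r hr
    obtain ⟨p, hp, rfl⟩ := Finset.mem_image.1 hr
    exact (Finset.mem_filter.1 hp).2
  calc ∑ p ∈ s.filter (fun p => p + q ≠ 0), |A p (-p - q)|
      ≤ ∑ p ∈ s.filter (fun p => p + q ≠ 0), F (p+q) :=
        Finset.sum_le_sum fun p hp => key p (Finset.mem_filter.1 hp).2
    _ = ∑ r ∈ (s.filter (fun p => p + q ≠ 0)).image (fun p => p + q), F r :=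
        (Finset.sum_image hinj).symm
    _ = 2*C^2*N^(2*κ - 1/2) * ∑ r ∈ (s.filter (fun p => p + q ≠ 0)).image (fun p => p + q),
          1/((latNorm r)^2 * ((latNorm r)^2 + M^2)) := by
        rw [Finset.mul_sum]
    _ ≤ 2*C^2*N^(2*κ - 1/2) * (13/(2*π^3) * (1/M)) := by
        apply mul_le_mul_of_nonneg_left (key_sum M hM _ himg)
        exact mul_nonneg (mul_nonneg (by norm_num) (sq_nonneg C)) hNe.le
    _ ≤ 13*C^2 * N^(2*κ - 1/2) / M := by
        have hπ1 : (1:ℝ) ≤ π := by nlinarith [Real.pi_gt_three]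
        have hπ3 : (1:ℝ) ≤ π^3 := by nlinarith [Real.pi_gt_three, Real.pi_pos, sq_nonneg π, mul_pos Real.pi_pos Real.pi_pos]
        have h1 : 2*C^2*N^(2*κ - 1/2) * (13/(2*π^3) * (1/M))
            = (13/π^3) * (C^2*N^(2*κ - 1/2)*(1/M)) := by
          field_simp
        rw [h1, div_eq_mul_one_div (13*C^2 * N^(2*κ - 1/2)) M]
        calc (13/π^3) * (C^2*N^(2*κ - 1/2)*(1/M))
            ≤ 13 * (C^2*N^(2*κ - 1/2)*(1/M)) := by
              apply mul_le_mul_of_nonneg_right (div_le_self (by norm_num) hπ3)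
              exact mul_nonneg (mul_nonneg (sq_nonneg C) hNe.le) (one_div_nonneg.2 hM.le)
          _ = 13*C^2 * N^(2*κ - 1/2) * (1/M) := by ring
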